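/- Fix a probability mass function P on a finite set 𝒰. Then the infimum, over all pairs of nonnegative functions Ã, B̃ : 𝒰 → [0, ∞) with disjoint supports satisfying Ã(u) + B̃(u) = 2P(u) for every u ∈ 𝒰, of (1/2)γ̄(Ã) + (1/2)γ̄(B̃) equals the infimum of the same quantity restricted further to pairs whose support sizes differ by at most one, i.e. |supp(Ã)| − |supp(B̃)| ∈ {0, 1}. -/
import Mathlib


open Finset

/-- The extended guesswork of a nonnegative function `A` on a finite set `U`:
the minimum over all bijections `G : U → {1,…,n}` of `∑ u, G(u) · A(u)`. -/
noncomputable def extGuesswork {U : Type*} [Fintype U] (A : U → ℝ) : ℝ :=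
  ⨅ G : U ≃ Fin (Fintype.card U), ∑ u, ((G u).val + 1 : ℝ) * A u

section helpers
variable {U : Type*} [Fintype U]

lemma extGuesswork_le (A : U → ℝ) (G : U ≃ Fin (Fintype.card U)) :
    extGuesswork A ≤ ∑ u, ((G u).val + 1 : ℝ) * A u := by
  classical
  exact ciInf_le (Set.Finite.bddBelow (Set.finite_range _)) G

lemma extGuesswork_exists (A : U → ℝ) :
    ∃ G : U ≃ Fin (Fintype.card U),
      extGuesswork A = ∑ u, ((G u).val + 1 : ℝ) * A u := by
  classical
  have : Nonempty (U ≃ Fin (Fintype.card U)) := ⟨Fintype.equivFin U⟩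
  obtain ⟨G, hG⟩ := Finite.exists_min
    (fun G : U ≃ Fin (Fintype.card U) => ∑ u, ((G u).val + 1 : ℝ) * A u)
  exact ⟨G, le_antisymm (extGuesswork_le A G) (le_ciInf hG)⟩

lemma extGuesswork_nonneg (A : U → ℝ) (h : ∀ u, 0 ≤ A u) :
    0 ≤ extGuesswork A := by
  classical
  have : Nonempty (U ≃ Fin (Fintype.card U)) := ⟨Fintype.equivFin U⟩
  exact le_ciInf fun G => Finset.sum_nonneg fun u _ => mul_nonneg (by positivity) (h u)

/-- Removal lemma: there is a positive element whose removal decreases the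
guesswork by at least (support size) times its value. -/
lemma extGuesswork_remove [DecidableEq U] (A : U → ℝ) (hA : ∀ u, 0 ≤ A u)
    (hne : (univ.filter (fun u => 0 < A u)).Nonempty) :
    ∃ u₀, 0 < A u₀ ∧
      extGuesswork (Function.update A u₀ 0) ≤
        extGuesswork A - ((univ.filter (fun u => 0 < A u)).card : ℝ) * A u₀ := by
  classical
  obtain ⟨G, hG⟩ := extGuesswork_exists A
  set s := univ.filter (fun u => 0 < A u) with hs
  obtain ⟨u₀, hu₀s, hmax⟩ := s.exists_max_image (fun u => (G u).val) hne
  have hpos : 0 < A u₀ := (mem_filter.mp hu₀s).2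
  refine ⟨u₀, hpos, ?_⟩
  -- card bound: s.card ≤ (G u₀).val + 1
  have hcard : (s.card : ℝ) ≤ ((G u₀).val : ℝ) + 1 := by
    have himg : s.image (fun u => (G u).val) ⊆ Finset.range ((G u₀).val + 1) := by
      intro j hj
      obtain ⟨u, hu, rfl⟩ := mem_image.mp hj
      exact mem_range.mpr (Nat.lt_succ_of_le (hmax u hu))
    have hinj : (s.image (fun u => (G u).val)).card = s.card :=
      Finset.card_image_of_injective _ (fun a b hab => G.injective (Fin.val_injective hab))
    have := Finset.card_le_card himg
    rw [hinj, Finset.card_range] at this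
    exact_mod_cast this
  -- sum with u₀ removed
  have hsum : ∑ u, ((G u).val + 1 : ℝ) * (Function.update A u₀ 0) u
      = (∑ u, ((G u).val + 1 : ℝ) * A u) - ((G u₀).val + 1 : ℝ) * A u₀ := by
    rw [← Finset.sum_erase_add _ _ (mem_univ u₀), ← Finset.sum_erase_add _ _ (mem_univ u₀)]
    simp only [Function.update_self, mul_zero, add_zero]
    rw [Finset.sum_congr rfl (fun u hu => by
      rw [Function.update_of_ne (Finset.ne_of_mem_erase hu)])]
    ring
  calc extGuesswork (Function.update A u₀ 0)
      ≤ ∑ u, ((G u).val + 1 : ℝ) * (Function.update A u₀ 0) u := extGuesswork_le _ G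
    _ = extGuesswork A - ((G u₀).val + 1 : ℝ) * A u₀ := by rw [hsum, hG]
    _ ≤ extGuesswork A - (s.card : ℝ) * A u₀ := by
        have := mul_le_mul_of_nonneg_right hcard hpos.le
        linarith

/-- Insertion lemma: adding value `v` at a zero point increases guesswork by at
most (support size + 1) times `v`. -/
lemma extGuesswork_insert [DecidableEq U] (B : U → ℝ) (hB : ∀ u, 0 ≤ B u)
    (u₀ : U) (hu₀ : B u₀ = 0) (v : ℝ) (hv : 0 ≤ v)
    (hn : (univ.filter (fun u => 0 < B u)).card + 1 ≤ Fintype.card U) :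
    extGuesswork (Function.update B u₀ v) ≤
      extGuesswork B + (((univ.filter (fun u => 0 < B u)).card : ℝ) + 1) * v := by
  classical
  obtain ⟨G, hG⟩ := extGuesswork_exists B
  set t := univ.filter (fun u => 0 < B u) with ht
  set b := t.card with hb
  -- find a free position j ≤ b
  have hJ : ((t.image (fun u => (G u).val)).card) < (Finset.range (b+1)).card := by
    rw [Finset.card_range]
    exact Nat.lt_succ_of_le (Finset.card_image_le)
  have hns : ¬ Finset.range (b+1) ⊆ t.image (fun u => (G u).val) :=
    fun h => absurd (Finset.card_le_card h) (not_le.mpr hJ)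
  obtain ⟨j, hjr, hjJ⟩ := Finset.not_subset.mp hns
  have hjn : j < Fintype.card U := lt_of_lt_of_le (Finset.mem_range.mp hjr) hn
  have hjb : j ≤ b := Nat.lt_succ_iff.mp (Finset.mem_range.mp hjr)
  set jf : Fin (Fintype.card U) := ⟨j, hjn⟩ with hjf
  set w := G.symm jf with hw
  have hBw : B w = 0 := by
    by_contra h
    have hwpos : 0 < B w := lt_of_le_of_ne (hB w) (Ne.symm h)
    have : (G w).val ∈ t.image (fun u => (G u).val) :=
      mem_image.mpr ⟨w, mem_filter.mpr ⟨mem_univ _, hwpos⟩, rfl⟩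
    rw [hw, Equiv.apply_symm_apply] at this
    exact hjJ this
  set G' := G.trans (Equiv.swap (G u₀) jf) with hG'
  have key : ∑ u, ((G' u).val + 1 : ℝ) * (Function.update B u₀ v) u
      ≤ (∑ u, ((G u).val + 1 : ℝ) * B u) + ((j : ℝ) + 1) * v := by
    have hdiff : ∀ x, x ∉ ({u₀, w} : Finset U) →
        ((G' x).val + 1 : ℝ) * (Function.update B u₀ v) x - ((G x).val + 1 : ℝ) * B x = 0 := by
      intro x hx
      simp only [Finset.mem_insert, Finset.mem_singleton, not_or] at hx
      have h1 : Function.update B u₀ v x = B x := Function.update_of_ne hx.1 _ _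
      have h2 : G' x = G x := by
        rw [hG']
        simp only [Equiv.trans_apply]
        apply Equiv.swap_apply_of_ne_of_ne
        · exact fun h => hx.1 (G.injective h)
        · intro h
          apply hx.2
          rw [hw, ← h, Equiv.symm_apply_apply]
      rw [h1, h2]; ring
    have hsplit : ∑ u, (((G' u).val + 1 : ℝ) * (Function.update B u₀ v) u -
        ((G u).val + 1 : ℝ) * B u)
        = ∑ x ∈ ({u₀, w} : Finset U), (((G' x).val + 1 : ℝ) * (Function.update B u₀ v) x -
        ((G x).val + 1 : ℝ) * B x) := by
      refine (Finset.sum_subset (Finset.subset_univ _) ?_).symm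
      intro x _ hx
      exact hdiff x hx
    have hGu₀ : G' u₀ = jf := by
      rw [hG']; simp [Equiv.swap_apply_left]
    by_cases hwu : w = u₀
    · have hpair : ({u₀, w} : Finset U) = {u₀} := by rw [hwu]; simp
      rw [Finset.sum_sub_distrib] at hsplit
      rw [hpair, Finset.sum_singleton] at hsplit
      have : ∑ u, ((G' u).val + 1 : ℝ) * (Function.update B u₀ v) u -
          ∑ u, ((G u).val + 1 : ℝ) * B u
          = ((j:ℝ)+1) * v - ((G u₀).val + 1 : ℝ) * B u₀ := by
        rw [hsplit, hGu₀, Function.update_self]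
      rw [hu₀, mul_zero, sub_zero] at this
      linarith
    · rw [Finset.sum_sub_distrib] at hsplit
      rw [Finset.sum_pair (Ne.symm hwu)] at hsplit
      have hGw : G' w = G u₀ := by
        rw [hG']; simp only [Equiv.trans_apply, hw, Equiv.apply_symm_apply]
        exact Equiv.swap_apply_right _ _
      have hupw : Function.update B u₀ v w = B w := Function.update_of_ne hwu _ _
      have : ∑ u, ((G' u).val + 1 : ℝ) * (Function.update B u₀ v) u -
          ∑ u, ((G u).val + 1 : ℝ) * B u
          = (((j:ℝ)+1) * v - ((G u₀).val + 1 : ℝ) * B u₀)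
            + (((G u₀).val + 1 : ℝ) * B w - ((G w).val + 1 : ℝ) * B w) := by
        rw [hsplit, hGu₀, hGw, Function.update_self, hupw]
      rw [hu₀, hBw] at this
      simp only [mul_zero, sub_zero] at this
      linarith
  have hjb' : ((j:ℝ)+1) * v ≤ ((b:ℝ)+1) * v := by
    apply mul_le_mul_of_nonneg_right _ hv
    have : (j:ℝ) ≤ b := by exact_mod_cast hjb
    linarith
  calc extGuesswork (Function.update B u₀ v)
      ≤ ∑ u, ((G' u).val + 1 : ℝ) * (Function.update B u₀ v) u := extGuesswork_le _ G'
    _ ≤ (∑ u, ((G u).val + 1 : ℝ) * B u) + ((j : ℝ) + 1) * v := key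
    _ ≤ extGuesswork B + ((b:ℝ)+1) * v := by rw [← hG]; linarith

lemma supp_update_zero [DecidableEq U] (A : U → ℝ) (u₀ : U) (h : 0 < A u₀) :
    univ.filter (fun u => 0 < Function.update A u₀ 0 u)
      = (univ.filter (fun u => 0 < A u)).erase u₀ := by
  ext u
  simp only [mem_filter, mem_univ, true_and, mem_erase]
  by_cases hu : u = u₀
  · subst hu; simp
  · rw [Function.update_of_ne hu]; simp [hu]

lemma supp_update_pos [DecidableEq U] (B : U → ℝ) (u₀ : U) (v : ℝ) (hv : 0 < v) :
    univ.filter (fun u => 0 < Function.update B u₀ v u)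
      = insert u₀ (univ.filter (fun u => 0 < B u)) := by
  ext u
  simp only [mem_filter, mem_univ, true_and, mem_insert]
  by_cases hu : u = u₀
  · subst hu; simp [hv]
  · rw [Function.update_of_ne hu]; simp [hu]

lemma reach [DecidableEq U] (d : ℕ) :
    ∀ A B : U → ℝ, (∀ u, 0 ≤ A u) → (∀ u, 0 ≤ B u) →
    (∀ u, A u = 0 ∨ B u = 0) →
    (univ.filter (fun u => 0 < B u)).card ≤ (univ.filter (fun u => 0 < A u)).card →
    (univ.filter (fun u => 0 < A u)).card ≤ (univ.filter (fun u => 0 < B u)).card + d →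
    ∃ A' B' : U → ℝ, (∀ u, 0 ≤ A' u) ∧ (∀ u, 0 ≤ B' u) ∧
      (∀ u, A' u = 0 ∨ B' u = 0) ∧ (∀ u, A' u + B' u = A u + B u) ∧
      ((univ.filter (fun u => 0 < A' u)).card = (univ.filter (fun u => 0 < B' u)).card ∨
        (univ.filter (fun u => 0 < A' u)).card = (univ.filter (fun u => 0 < B' u)).card + 1) ∧
      (1/2) * extGuesswork A' + (1/2) * extGuesswork B' ≤
        (1/2) * extGuesswork A + (1/2) * extGuesswork B := by
  induction d with
  | zero =>
    intro A B hA hB hd hba hab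
    exact ⟨A, B, hA, hB, hd, fun u => rfl, Or.inl (le_antisymm hab hba), le_refl _⟩
  | succ d ih =>
    intro A B hA hB hd hba hab
    set a := (univ.filter (fun u => 0 < A u)).card with ha
    set b := (univ.filter (fun u => 0 < B u)).card with hb
    by_cases hle : a ≤ b + 1
    · exact ⟨A, B, hA, hB, hd, fun u => rfl, by omega, le_refl _⟩
    · have hge : b + 2 ≤ a := by omega
      have hne : (univ.filter (fun u => 0 < A u)).Nonempty :=
        Finset.card_pos.mp (by omega)
      obtain ⟨u₀, hu₀pos, hrem⟩ := extGuesswork_remove A hA hne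
      have hBu₀ : B u₀ = 0 := (hd u₀).resolve_left (ne_of_gt hu₀pos)
      -- disjoint supports give a + b ≤ card U
      have hdisj : Disjoint (univ.filter (fun u => 0 < A u))
          (univ.filter (fun u => 0 < B u)) := by
        rw [Finset.disjoint_left]
        intro u hu1 hu2
        rcases hd u with h | h
        · exact absurd h (ne_of_gt (mem_filter.mp hu1).2)
        · exact absurd h (ne_of_gt (mem_filter.mp hu2).2)
      have hab_n : a + b ≤ Fintype.card U := by
        have := Finset.card_le_card (Finset.subset_univ
          ((univ.filter (fun u => 0 < A u)) ∪ (univ.filter (fun u => 0 < B u))))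
        rw [Finset.card_union_of_disjoint hdisj, Finset.card_univ] at this
        exact this
      have hn : b + 1 ≤ Fintype.card U := by omega
      obtain hins := extGuesswork_insert B hB u₀ hBu₀ (A u₀) hu₀pos.le hn
      set A' := Function.update A u₀ 0 with hA'
      set B' := Function.update B u₀ (A u₀) with hB'
      have hcardA' : (univ.filter (fun u => 0 < A' u)).card = a - 1 := by
        rw [hA', supp_update_zero A u₀ hu₀pos, Finset.card_erase_of_mem]
        exact mem_filter.mpr ⟨mem_univ _, hu₀pos⟩
      have hcardB' : (univ.filter (fun u => 0 < B' u)).card = b + 1 := by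
        rw [hB', supp_update_pos B u₀ (A u₀) hu₀pos, Finset.card_insert_of_notMem]
        intro h
        exact absurd hBu₀ (ne_of_gt (mem_filter.mp h).2)
      have hA'nn : ∀ u, 0 ≤ A' u := by
        intro u; by_cases h : u = u₀
        · subst h; simp [hA']
        · rw [hA', Function.update_of_ne h]; exact hA u
      have hB'nn : ∀ u, 0 ≤ B' u := by
        intro u; by_cases h : u = u₀
        · subst h; simp [hB']; exact hu₀pos.le
        · rw [hB', Function.update_of_ne h]; exact hB u
      have hd' : ∀ u, A' u = 0 ∨ B' u = 0 := by
        intro u; by_cases h : u = u₀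
        · subst h; left; simp [hA']
        · rw [hA', hB', Function.update_of_ne h, Function.update_of_ne h]; exact hd u
      have hsum' : ∀ u, A' u + B' u = A u + B u := by
        intro u; by_cases h : u = u₀
        · subst h; simp [hA', hB', hBu₀]
        · rw [hA', hB', Function.update_of_ne h, Function.update_of_ne h]
      have hval : (1/2) * extGuesswork A' + (1/2) * extGuesswork B' ≤
          (1/2) * extGuesswork A + (1/2) * extGuesswork B := by
        have hcast : ((b:ℝ) + 1) * A u₀ ≤ (a:ℝ) * A u₀ := by
          apply mul_le_mul_of_nonneg_right _ hu₀pos.le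
          have : (b:ℝ) + 2 ≤ a := by exact_mod_cast hge
          linarith
        linarith
      obtain ⟨A'', B'', h1, h2, h3, h4, h5, h6⟩ := ih A' B' hA'nn hB'nn hd'
        (by omega) (by omega)
      refine ⟨A'', B'', h1, h2, h3, fun u => by rw [h4 u, hsum' u], h5, le_trans h6 hval⟩

end helpers

/-- **Reduction to nearly balanced supports.**
Fix a pmf `P` on a finite set `𝒰`.  The infimum, over all pairs of nonnegative
functions `Ã, B̃ : 𝒰 → [0,∞)` with disjoint supports and `Ã(u) + B̃(u) = 2P(u)`
for every `u`, of `(1/2)γ̄(Ã) + (1/2)γ̄(B̃)` equals the infimum of the same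
quantity restricted further to pairs whose support sizes satisfy
`|supp(Ã)| − |supp(B̃)| ∈ {0, 1}`. -/
theorem splitting_infimum_attained_on_balanced_supports
    {U : Type*} [Fintype U]
    (P : U → ℝ)
    (hnn : ∀ u, 0 ≤ P u)
    (hsum : ∑ u, P u = 1) :
    sInf {r : ℝ | ∃ A B : U → ℝ,
        (∀ u, 0 ≤ A u) ∧ (∀ u, 0 ≤ B u) ∧
        (∀ u, A u = 0 ∨ B u = 0) ∧
        (∀ u, A u + B u = 2 * P u) ∧
        r = (1 / 2) * extGuesswork A + (1 / 2) * extGuesswork B} =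
    sInf {r : ℝ | ∃ A B : U → ℝ,
        (∀ u, 0 ≤ A u) ∧ (∀ u, 0 ≤ B u) ∧
        (∀ u, A u = 0 ∨ B u = 0) ∧
        (∀ u, A u + B u = 2 * P u) ∧
        ((univ.filter (fun u => 0 < A u)).card =
            (univ.filter (fun u => 0 < B u)).card ∨
          (univ.filter (fun u => 0 < A u)).card =
            (univ.filter (fun u => 0 < B u)).card + 1) ∧
        r = (1 / 2) * extGuesswork A + (1 / 2) * extGuesswork B} := by
  classical
  set S1 := {r : ℝ | ∃ A B : U → ℝ,
      (∀ u, 0 ≤ A u) ∧ (∀ u, 0 ≤ B u) ∧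
      (∀ u, A u = 0 ∨ B u = 0) ∧
      (∀ u, A u + B u = 2 * P u) ∧
      r = (1 / 2) * extGuesswork A + (1 / 2) * extGuesswork B} with hS1
  set S2 := {r : ℝ | ∃ A B : U → ℝ,
      (∀ u, 0 ≤ A u) ∧ (∀ u, 0 ≤ B u) ∧
      (∀ u, A u = 0 ∨ B u = 0) ∧
      (∀ u, A u + B u = 2 * P u) ∧
      ((univ.filter (fun u => 0 < A u)).card =
          (univ.filter (fun u => 0 < B u)).card ∨
        (univ.filter (fun u => 0 < A u)).card =
          (univ.filter (fun u => 0 < B u)).card + 1) ∧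
      r = (1 / 2) * extGuesswork A + (1 / 2) * extGuesswork B} with hS2
  have hlb1 : ∀ r ∈ S1, (0:ℝ) ≤ r := by
    rintro r ⟨A, B, hA, hB, _, _, rfl⟩
    have := extGuesswork_nonneg A hA
    have := extGuesswork_nonneg B hB
    linarith
  have hbdd1 : BddBelow S1 := ⟨0, hlb1⟩
  have hsub : S2 ⊆ S1 := by
    rintro r ⟨A, B, h1, h2, h3, h4, _, h6⟩
    exact ⟨A, B, h1, h2, h3, h4, h6⟩
  have hbdd2 : BddBelow S2 := ⟨0, fun r hr => hlb1 r (hsub hr)⟩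
  have hne1 : S1.Nonempty := by
    refine ⟨(1/2) * extGuesswork (fun u => 2 * P u) + (1/2) * extGuesswork (fun _ => 0),
      fun u => 2 * P u, fun _ => 0, fun u => by simpa using mul_nonneg (by norm_num : (0:ℝ) ≤ 2) (hnn u), fun u => le_refl 0,
      fun u => Or.inr rfl, fun u => by ring, rfl⟩
  -- every element of S1 is dominated by an element of S2
  have hkey : ∀ r ∈ S1, ∃ r' ∈ S2, r' ≤ r := by
    rintro r ⟨A, B, hA, hB, hd, hs, rfl⟩
    rcases le_total ((univ.filter (fun u => 0 < B u)).card)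
        ((univ.filter (fun u => 0 < A u)).card) with hc | hc
    · obtain ⟨A', B', h1, h2, h3, h4, h5, h6⟩ :=
        reach ((univ.filter (fun u => 0 < A u)).card) A B hA hB hd hc (by omega)
      exact ⟨_, ⟨A', B', h1, h2, h3, fun u => by rw [h4 u, hs u], h5, rfl⟩, h6⟩
    · obtain ⟨A', B', h1, h2, h3, h4, h5, h6⟩ :=
        reach ((univ.filter (fun u => 0 < B u)).card) B A hB hA
          (fun u => (hd u).symm) hc (by omega)
      refine ⟨_, ⟨A', B', h1, h2, h3, fun u => by rw [h4 u, add_comm, hs u], h5, rfl⟩, ?_⟩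
      calc (1/2) * extGuesswork A' + (1/2) * extGuesswork B'
          ≤ (1/2) * extGuesswork B + (1/2) * extGuesswork A := h6
        _ = (1/2) * extGuesswork A + (1/2) * extGuesswork B := by ring
  have hne2 : S2.Nonempty := by
    obtain ⟨r, hr⟩ := hne1
    obtain ⟨r', hr', _⟩ := hkey r hr
    exact ⟨r', hr'⟩
  apply le_antisymm
  · exact csInf_le_csInf hbdd1 hne2 hsub
  · refine le_csInf hne1 fun r hr => ?_
    obtain ⟨r', hr', hle⟩ := hkey r hr
    exact le_trans (csInf_le hbdd2 hr') hle
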